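/- arXiv:1009.1193 — 3 statements merged into one kernel-verified Lean document; each statement's English description precedes it below -/
import Mathlib

section
/- Let Y be a real Gaussian random variable with mean μ and variance σ² > 0, and for d > 0 define X_d = ⌊Y/d⌋ mod 2 ∈ {0,1}. Then as d → 0⁺, P(X_d = 0) → 1/2; i.e., the distribution of X_d converges to the Bernoulli(1/2) distribution. -/
open Filter Topology MeasureTheory ProbabilityTheory NNReal

/-- Translation by `d` as a continuous map on `ℝ`. -/
noncomputable def gpTranslate (d : ℝ) : C(ℝ, ℝ) := ⟨fun x => x + d, by continuity⟩

lemma gpTranslate_mp (d : ℝ) : MeasurePreserving (gpTranslate d) volume volume :=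
  measurePreserving_add_right volume d

lemma gpTranslate_cont : Continuous gpTranslate :=
  ContinuousMap.continuous_of_continuous_uncurry _ (continuous_snd.add continuous_fst)

lemma gp_mem_shift {d : ℝ} (hd : 0 < d) (x : ℝ) :
    (⌊(x + d) / d⌋ % 2 = 0) ↔ ¬ (⌊x / d⌋ % 2 = 0) := by
  have h1 : (x + d) / d = x / d + 1 := by field_simp
  rw [h1, Int.floor_add_one]
  omega

lemma gpE_meas (d : ℝ) : MeasurableSet {y : ℝ | ⌊y / d⌋ % 2 = 0} := by
  have h : Measurable fun y : ℝ => ⌊y / d⌋ :=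
    Int.measurable_floor.comp (measurable_id.div_const d)
  exact h (MeasurableSet.of_discrete (s := {n : ℤ | n % 2 = 0}))

/-- For a real Gaussian `Y` with mean `m` and variance `v > 0`, the parity bit
`X_d = ⌊Y/d⌋ mod 2` of the scale-`d` quantization satisfies `P(X_d = 0) → 1/2` as
`d → 0⁺`; i.e. the parity becomes a fair coin in the fine-quantization limit. -/
theorem gaussian_parity_tendsto_half (m : ℝ) (v : ℝ≥0) (hv : 0 < v) :
    Tendsto (fun d : ℝ =>
        ((gaussianReal m v) {y : ℝ | ⌊y / d⌋ % 2 = 0}).toReal)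
      (nhdsWithin 0 (Set.Ioi 0)) (nhds (1/2)) := by
  have hv' : v ≠ 0 := hv.ne'
  set f : ℝ → ℝ := gaussianPDFReal m v with hfdef
  have hint : Integrable f := integrable_gaussianPDFReal m v
  have hnonneg : ∀ x, 0 ≤ f x := gaussianPDFReal_nonneg m v
  set F : Lp ℝ 1 (volume : Measure ℝ) := hint.toL1 _ with hF
  set C : ℝ → Lp ℝ 1 (volume : Measure ℝ) :=
    fun d => MeasureTheory.Lp.compMeasurePreserving (gpTranslate d) (gpTranslate_mp d) F
    with hCdef
  have hC : Continuous C :=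
    continuous_const.compMeasurePreservingLp gpTranslate_cont gpTranslate_mp (by norm_num)
  -- a.e. description of `C d`
  have hae : ∀ d : ℝ, (C d : ℝ → ℝ) =ᵐ[volume] fun x => f (x + d) := by
    intro d
    have h1 : (C d : ℝ → ℝ) =ᵐ[volume] (F : ℝ → ℝ) ∘ (gpTranslate d) :=
      MeasureTheory.Lp.coeFn_compMeasurePreserving F (gpTranslate_mp d)
    have h2 : ((F : ℝ → ℝ) ∘ (gpTranslate d)) =ᵐ[volume] (f ∘ (gpTranslate d)) :=
      (hint.coeFn_toL1).comp_tendsto (gpTranslate_mp d).quasiMeasurePreserving.tendsto_ae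
    filter_upwards [h1, h2] with x hx1 hx2
    rw [hx1, hx2]; rfl
  -- the `L¹` distance between `f` and its translate
  have hnorm : ∀ d : ℝ, ∫ x : ℝ, |f (x + d) - f x| = ‖C d - C 0‖ := by
    intro d
    rw [MeasureTheory.L1.norm_eq_integral_norm]
    refine integral_congr_ae ?_
    filter_upwards [hae d, hae 0, MeasureTheory.Lp.coeFn_sub (C d) (C 0)] with x h1 h2 h3
    rw [h3]
    simp [h1, h2, Real.norm_eq_abs]
  have hTnorm : Tendsto (fun d : ℝ => ‖C d - C 0‖ / 2) (nhdsWithin 0 (Set.Ioi 0)) (nhds 0) := by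
    have h1 : Tendsto (fun d : ℝ => C d - C 0) (nhds 0) (nhds (C 0 - C 0)) :=
      (hC.tendsto 0).sub tendsto_const_nhds
    rw [sub_self] at h1
    have h2 : Tendsto (fun d : ℝ => ‖C d - C 0‖ / 2) (nhds 0)
        (nhds (‖(0 : Lp ℝ 1 (volume : Measure ℝ))‖ / 2)) :=
      (h1.norm).div_const 2
    simpa using h2.mono_left nhdsWithin_le_nhds
  -- main estimate for d > 0
  have hmain : ∀ d : ℝ, 0 < d →
      ‖((gaussianReal m v) {y : ℝ | ⌊y / d⌋ % 2 = 0}).toReal - 1/2‖ ≤ ‖C d - C 0‖ / 2 := by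
    intro d hd
    set E : Set ℝ := {y : ℝ | ⌊y / d⌋ % 2 = 0} with hEdef
    have hE : MeasurableSet E := gpE_meas d
    have hPv : ((gaussianReal m v) E).toReal = ∫ x in E, f x := by
      rw [gaussianReal_apply_eq_integral m hv' E, ENNReal.toReal_ofReal]
      exact integral_nonneg fun x => hnonneg x
    have hintd : Integrable (fun x => f (x + d)) := hint.comp_add_right d
    -- integral over the complement equals the shifted integral over `E`
    have hQ : ∫ x in Eᶜ, f x = ∫ x in E, f (x + d) := by
      rw [← integral_indicator hE.compl, ← integral_indicator hE]
      rw [← integral_add_right_eq_self (fun x => Eᶜ.indicator f x) d]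
      refine integral_congr_ae (Filter.Eventually.of_forall fun x => ?_)
      have hmem : (x + d ∈ Eᶜ) ↔ x ∈ E := by
        simp only [hEdef, Set.mem_compl_iff, Set.mem_setOf_eq]
        rw [gp_mem_shift hd x]
        tauto
      simp only [Set.indicator_apply]
      exact if_congr hmem rfl rfl
    have hsum : (∫ x in E, f x) + (∫ x in Eᶜ, f x) = 1 := by
      rw [integral_add_compl hE hint]
      exact integral_gaussianPDFReal_eq_one m hv'
    have hdiff : (∫ x in E, f x) - (∫ x in E, f (x + d)) = ∫ x in E, (f x - f (x + d)) :=
      (integral_sub hint.restrict hintd.restrict).symm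
    have hb1 : ‖∫ x in E, (f x - f (x + d))‖ ≤ ∫ x in E, ‖f x - f (x + d)‖ :=
      norm_integral_le_integral_norm _
    have hb2 : (∫ x in E, ‖f x - f (x + d)‖) ≤ ∫ x, ‖f x - f (x + d)‖ :=
      setIntegral_le_integral ((hint.sub hintd).norm)
        (Filter.Eventually.of_forall fun x => norm_nonneg _)
    have hb3 : (∫ x : ℝ, ‖f x - f (x + d)‖) = ‖C d - C 0‖ := by
      rw [← hnorm d]
      refine integral_congr_ae (Filter.Eventually.of_forall fun x => ?_)
      simp only [Real.norm_eq_abs, abs_sub_comm]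
    have hkey : ((gaussianReal m v) E).toReal - 1/2
        = (∫ x in E, (f x - f (x + d))) / 2 := by
      rw [hPv, ← hdiff, ← hQ]
      linarith
    rw [hkey]
    rw [norm_div, Real.norm_ofNat]
    have : ‖∫ x in E, (f x - f (x + d))‖ ≤ ‖C d - C 0‖ :=
      le_trans hb1 (le_trans hb2 (le_of_eq hb3))
    linarith
  -- conclude by squeezing
  rw [← tendsto_sub_nhds_zero_iff]
  refine squeeze_zero_norm' ?_ hTnorm
  filter_upwards [self_mem_nhdsWithin] with d hd
  exact hmain d hd
end

section
/- Let Y be a real random variable whose law has a density f that is Riemann integrable and of bounded variation on ℝ. For d > 0 let X_d = ⌊Y/d⌋ mod 2. Then P(X_d = 0) → 1/2 as d → 0⁺. -/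
open Filter Topology MeasureTheory

lemma l1_translate_tendsto (f : ℝ → ℝ) (hf : Integrable f volume) :
    Tendsto (fun d : ℝ => ∫ y, |f (y + d) - f y|) (𝓝 0) (𝓝 0) := by
  haveI : Fact ((1 : ENNReal) ≤ 1) := ⟨le_rfl⟩
  set F : Lp ℝ 1 (volume : Measure ℝ) := hf.toL1 f with hF
  set cm : ℝ → C(ℝ, ℝ) := fun d => ⟨fun x => x + d, by continuity⟩ with hcmdef
  have hcm : Continuous cm :=
    ContinuousMap.continuous_of_continuous_uncurry _
      (continuous_snd.add continuous_fst)
  have hmp : ∀ d : ℝ, MeasurePreserving (cm d) volume volume := fun d =>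
    measurePreserving_add_right volume d
  set T : ℝ → Lp ℝ 1 (volume : Measure ℝ) := fun d =>
    Lp.compMeasurePreserving (cm d) (hmp d) F with hT
  have h0 : T 0 = F := by
    apply Lp.ext
    filter_upwards [Lp.coeFn_compMeasurePreserving (μ := volume) F (hmp 0),
      hf.coeFn_toL1] with y hy hy'
    simp only [hT, hy, Function.comp]
    simp [hcmdef, hy']
  have htend : Tendsto T (𝓝 0) (𝓝 F) := by
    have hc : ContinuousAt (fun d : ℝ => Lp.compMeasurePreserving (cm d) (hmp d) F) 0 :=
      ContinuousAt.compMeasurePreservingLp continuousAt_const hcm.continuousAt hmp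
        (by norm_num)
    rw [← h0]
    exact hc
  have hnorm : Tendsto (fun d : ℝ => ‖T d - F‖) (𝓝 0) (𝓝 0) :=
    tendsto_iff_norm_sub_tendsto_zero.mp htend
  refine hnorm.congr fun d => ?_
  rw [L1.norm_eq_integral_norm]
  refine integral_congr_ae ?_
  filter_upwards [Lp.coeFn_sub (T d) F, Lp.coeFn_compMeasurePreserving (μ := volume) F (hmp d),
    hf.coeFn_toL1, (hmp d).quasiMeasurePreserving.ae_eq_comp hf.coeFn_toL1]
    with y hy hy' hy'' hy'''
  simp only [hT] at hy
  rw [hy, Pi.sub_apply, hy', hy''']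
  simp only [Function.comp, hy'', Real.norm_eq_abs]
  simp only [hF, hy'']
  simp [hcmdef]

/-- If the law of a real random variable has a density `f` that is (Riemann) integrable and
of bounded variation on `ℝ`, then the parity bit `X_d = ⌊Y/d⌋ mod 2` of the scale-`d`
quantization satisfies `P(X_d = 0) → 1/2` as `d → 0⁺`. -/
theorem bv_density_parity_tendsto_half (f : ℝ → ℝ) (μ : Measure ℝ) [IsProbabilityMeasure μ]
    (hf_int : Integrable f volume) (hf_bv : BoundedVariationOn f Set.univ)
    (hf_nonneg : ∀ y, 0 ≤ f y)
    (hμ : μ = volume.withDensity (fun y => ENNReal.ofReal (f y))) :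
    Tendsto (fun d : ℝ => (μ {y : ℝ | ⌊y / d⌋ % 2 = 0}).toReal)
      (nhdsWithin 0 (Set.Ioi 0)) (nhds (1/2)) := by
  set E : ℝ → Set ℝ := fun d => {y : ℝ | ⌊y / d⌋ % 2 = 0} with hE
  have hmeasE : ∀ d : ℝ, MeasurableSet (E d) := by
    intro d
    have h1 : Measurable fun y : ℝ => ⌊y / d⌋ :=
      Int.measurable_floor.comp (measurable_id.div_const d)
    exact h1 (show MeasurableSet {n : ℤ | n % 2 = 0} by trivial)
  have hint1 : ∫ y, f y = 1 := by
    have h1 : μ Set.univ = 1 := measure_univ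
    rw [hμ, withDensity_apply _ MeasurableSet.univ, Measure.restrict_univ] at h1
    rw [MeasureTheory.integral_eq_lintegral_of_nonneg_ae
      (Filter.Eventually.of_forall hf_nonneg) hf_int.aestronglyMeasurable, h1]
    simp
  have hPe : ∀ d : ℝ, (μ (E d)).toReal = ∫ y in E d, f y := by
    intro d
    rw [hμ, withDensity_apply _ (hmeasE d),
      MeasureTheory.integral_eq_lintegral_of_nonneg_ae
        (Filter.Eventually.of_forall hf_nonneg) hf_int.aestronglyMeasurable.restrict]
  have hsum : ∀ d : ℝ, (∫ y in E d, f y) + ∫ y in (E d)ᶜ, f y = 1 := fun d => by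
    rw [integral_add_compl (hmeasE d) hf_int, hint1]
  have hi1 : ∀ d : ℝ, Integrable (fun y => f (y + d)) volume := by
    intro d
    exact ((measurePreserving_add_right volume d).integrable_comp
      hf_int.aestronglyMeasurable).mpr hf_int
  have hcompl : ∀ d : ℝ, 0 < d → ∫ y in (E d)ᶜ, f y = ∫ y in E d, f (y + d) := by
    intro d hd
    have hpre : ∀ y : ℝ, y + d ∈ (E d)ᶜ ↔ y ∈ E d := by
      intro y
      simp only [Set.mem_compl_iff, hE, Set.mem_setOf_eq]
      have h2 : (y + d) / d = y / d + 1 := by field_simp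
      rw [h2, show (1 : ℝ) = ((1 : ℤ) : ℝ) by norm_num, Int.floor_add_intCast]
      omega
    calc ∫ y in (E d)ᶜ, f y = ∫ y, ((E d)ᶜ).indicator f y :=
          (integral_indicator (hmeasE d).compl).symm
      _ = ∫ y, ((E d)ᶜ).indicator f (y + d) := (integral_add_right_eq_self _ d).symm
      _ = ∫ y, (E d).indicator (fun y => f (y + d)) y := by
          refine integral_congr_ae (Filter.Eventually.of_forall fun y => ?_)
          show ((E d)ᶜ).indicator f (y + d) = (E d).indicator (fun y => f (y + d)) y
          by_cases h : y ∈ E d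
          · rw [Set.indicator_of_mem ((hpre y).mpr h), Set.indicator_of_mem h]
          · rw [Set.indicator_of_notMem (fun hc => h ((hpre y).mp hc)),
              Set.indicator_of_notMem h]
      _ = ∫ y in E d, f (y + d) := integral_indicator (hmeasE d)
  have hbound : ∀ d : ℝ, 0 < d →
      |(∫ y in E d, f y) - ∫ y in (E d)ᶜ, f y| ≤ ∫ y, |f (y + d) - f y| := by
    intro d hd
    rw [hcompl d hd, ← integral_sub hf_int.restrict (hi1 d).restrict]
    calc |∫ y in E d, (f y - f (y + d))| ≤ ∫ y in E d, |f y - f (y + d)| := by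
          simpa [Real.norm_eq_abs] using
            norm_integral_le_integral_norm (μ := volume.restrict (E d))
              (fun y => f y - f (y + d))
      _ ≤ ∫ y, |f y - f (y + d)| :=
          setIntegral_le_integral (hf_int.sub (hi1 d)).abs
            (Filter.Eventually.of_forall fun y => abs_nonneg _)
      _ = ∫ y, |f (y + d) - f y| := by simp_rw [abs_sub_comm]
  have hω := l1_translate_tendsto f hf_int
  have hdiff : Tendsto (fun d : ℝ => (∫ y in E d, f y) - ∫ y in (E d)ᶜ, f y)
      (nhdsWithin 0 (Set.Ioi 0)) (𝓝 0) := by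
    apply squeeze_zero_norm' ?_ (hω.mono_left nhdsWithin_le_nhds)
    filter_upwards [self_mem_nhdsWithin] with d hd
    simpa [Real.norm_eq_abs] using hbound d hd
  have hlim : Tendsto (fun d : ℝ =>
      (1 + ((∫ y in E d, f y) - ∫ y in (E d)ᶜ, f y)) / 2)
      (nhdsWithin 0 (Set.Ioi 0)) (𝓝 (1 / 2)) := by
    have := (hdiff.const_add (1:ℝ)).div_const 2
    simpa using this
  refine hlim.congr fun d => ?_
  rw [hPe d]
  have := hsum d
  linarith
end

section
/- Let Y be a real Gaussian random variable with variance σ², and for d > 0 let X_d = ⌊Y/d⌋ mod 2. Then H(X_d) → 0 as σ/d → 0 with the mean μ fixed at a point that is not of the form kd for integer k (i.e., μ/d ∉ ℤ, d fixed, σ → 0). -/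
open Filter Topology MeasureTheory ProbabilityTheory NNReal

/-- Binary entropy (in bits) of a probability `p`, with the convention `0·log 0 = 0`. -/
noncomputable def binEnt (p : ℝ) : ℝ :=
  -(p * Real.logb 2 p) - (1 - p) * Real.logb 2 (1 - p)

lemma binEnt_eq (p : ℝ) :
    binEnt p = (Real.negMulLog p + Real.negMulLog (1 - p)) / Real.log 2 := by
  simp only [binEnt, Real.negMulLog, Real.logb]
  ring

lemma continuous_binEnt : Continuous binEnt := by
  simp only [funext binEnt_eq]
  exact (Real.continuous_negMulLog.add
    (Real.continuous_negMulLog.comp (continuous_const.sub continuous_id))).div_const _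

lemma binEnt_zero : binEnt 0 = 0 := by simp [binEnt]

lemma binEnt_one : binEnt 1 = 0 := by simp [binEnt]

instance gaussianReal_sq_isProb (m σ : ℝ) :
    IsProbabilityMeasure (gaussianReal m (⟨σ ^ 2, sq_nonneg σ⟩ : ℝ≥0)) :=
  instIsProbabilityMeasureGaussianReal _ _

/-- Tail measure of the standard-type bound: measure of `{x | R ≤ |x|}` tends to 0. -/
lemma tendsto_tail_measure (ν : Measure ℝ) [IsFiniteMeasure ν] :
    Tendsto (fun R : ℝ => ν {x | R ≤ |x|}) atTop (𝓝 0) := by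
  have hmeas : ∀ R : ℝ, NullMeasurableSet {x : ℝ | R ≤ |x|} ν := fun R =>
    (measurableSet_le measurable_const continuous_abs.measurable).nullMeasurableSet
  have hanti : Antitone (fun R : ℝ => {x : ℝ | R ≤ |x|}) := by
    intro a b hab x hx
    exact le_trans hab hx
  have h := tendsto_measure_iInter_atTop (μ := ν) hmeas hanti ⟨0, measure_ne_top ν _⟩
  have hempty : ⋂ R : ℝ, {x : ℝ | R ≤ |x|} = ∅ := by
    ext x
    simp only [Set.mem_iInter, Set.mem_setOf_eq, Set.mem_empty_iff_false, iff_false, not_forall]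
    exact ⟨|x| + 1, by push_neg; linarith⟩
  rw [hempty] at h
  simpa [Function.comp_def] using h

/-- Concentration: the mass outside an `ε`-neighborhood of the mean tends to 0 as `σ → 0⁺`. -/
lemma gaussian_tail_tendsto (m ε : ℝ) (hε : 0 < ε) :
    Tendsto (fun σ : ℝ =>
        ((gaussianReal m (⟨σ ^ 2, sq_nonneg σ⟩ : ℝ≥0)) {y : ℝ | ε ≤ |y - m|}).toReal)
      (nhdsWithin 0 (Set.Ioi 0)) (𝓝 0) := by
  set ν : Measure ℝ := gaussianReal 0 1 with hν
  have hRtend : Tendsto (fun σ : ℝ => ε / σ) (nhdsWithin 0 (Set.Ioi 0)) atTop := by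
    simpa [div_eq_mul_inv] using tendsto_inv_nhdsGT_zero.const_mul_atTop hε
  have htail := (tendsto_tail_measure ν).comp hRtend
  have htailR : Tendsto (fun σ : ℝ => (ν {x | ε / σ ≤ |x|}).toReal)
      (nhdsWithin 0 (Set.Ioi 0)) (𝓝 0) := by
    have := (ENNReal.tendsto_toReal (by simp)).comp htail
    simpa [Function.comp_def] using this
  refine htailR.congr' ?_
  filter_upwards [self_mem_nhdsWithin] with σ (hσ : 0 < σ)
  have hSmeas : MeasurableSet {y : ℝ | ε ≤ |y - m|} :=
    measurableSet_le measurable_const (continuous_abs.comp (continuous_id.sub continuous_const)).measurable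
  have hmap : gaussianReal m (⟨σ ^ 2, sq_nonneg σ⟩ : ℝ≥0)
      = ν.map (fun x => σ * x + m) := by
    have h1 : ν.map (fun x => σ * x) = gaussianReal 0 (⟨σ ^ 2, sq_nonneg σ⟩ : ℝ≥0) := by
      have := gaussianReal_map_const_mul (μ := 0) (v := 1) σ
      convert this using 2 <;> simp <;> rfl
    have h2 : (ν.map (fun x => σ * x)).map (fun x => x + m)
        = gaussianReal (0 + m) (⟨σ ^ 2, sq_nonneg σ⟩ : ℝ≥0) := by
      rw [h1]
      exact gaussianReal_map_add_const m
    rw [Measure.map_map (show Measurable fun x : ℝ => x + m by fun_prop)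
      (show Measurable fun x : ℝ => σ * x by fun_prop)] at h2
    simp only [zero_add] at h2
    rw [← h2]
    congr 1
  rw [hmap, Measure.map_apply (show Measurable fun x : ℝ => σ * x + m by fun_prop) hSmeas]
  congr 2
  ext x
  simp only [Set.mem_preimage, Set.mem_setOf_eq, add_sub_cancel_right, abs_mul,
    abs_of_pos hσ]
  rw [div_le_iff₀' hσ]

/-- Fix a quantization scale `d > 0` and a mean `m` that is not a lattice point `k·d`.
As the Gaussian `Y ~ N(m, σ²)` concentrates (`σ → 0⁺`), the parity bit
`X_d = ⌊Y/d⌋ mod 2` becomes deterministic: its entropy `H(X_d)` tends to `0`. -/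
theorem gaussian_parity_entropy_tendsto_zero (d m : ℝ) (hd : 0 < d)
    (hm : ¬ ∃ k : ℤ, m = k * d) :
    Tendsto (fun σ : ℝ =>
        binEnt (((gaussianReal m (⟨σ ^ 2, sq_nonneg σ⟩ : ℝ≥0))
          {y : ℝ | ⌊y / d⌋ % 2 = 1}).toReal))
      (nhdsWithin 0 (Set.Ioi 0)) (nhds 0) := by
  set k : ℤ := ⌊m / d⌋ with hk
  have hlt1 : (k : ℝ) * d < m := by
    have h1 : (k : ℝ) ≤ m / d := Int.floor_le _
    have h2 : (k : ℝ) ≠ m / d := by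
      intro h
      exact hm ⟨k, by field_simp at h ⊢; linarith [h]⟩
    have : (k : ℝ) < m / d := lt_of_le_of_ne h1 h2
    exact (lt_div_iff₀ hd).mp this
  have hlt2 : m < ((k : ℝ) + 1) * d := by
    have : m / d < (k : ℝ) + 1 := Int.lt_floor_add_one _
    exact (div_lt_iff₀ hd).mp this
  set ε : ℝ := min (m - (k : ℝ) * d) (((k : ℝ) + 1) * d - m) with hε
  have hεpos : 0 < ε := lt_min (by linarith) (by linarith)
  -- inside the ε-ball around m, the floor is constantly k
  have hfloor : ∀ y : ℝ, |y - m| < ε → ⌊y / d⌋ = k := by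
    intro y hy
    rw [abs_lt] at hy
    have hy1 : (k : ℝ) * d ≤ y := by
      have := min_le_left (m - (k : ℝ) * d) (((k : ℝ) + 1) * d - m)
      linarith [hy.1]
    have hy2 : y < ((k : ℝ) + 1) * d := by
      have := min_le_right (m - (k : ℝ) * d) (((k : ℝ) + 1) * d - m)
      linarith [hy.2]
    rw [Int.floor_eq_iff]
    constructor
    · exact (le_div_iff₀ hd).mpr hy1
    · push_cast
      exact (div_lt_iff₀ hd).mpr hy2
  have hq := gaussian_tail_tendsto m ε hεpos
  set S : Set ℝ := {y : ℝ | ⌊y / d⌋ % 2 = 1} with hS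
  set p : ℝ → ℝ := fun σ =>
    ((gaussianReal m (⟨σ ^ 2, sq_nonneg σ⟩ : ℝ≥0)) S).toReal with hp
  set q : ℝ → ℝ := fun σ =>
    ((gaussianReal m (⟨σ ^ 2, sq_nonneg σ⟩ : ℝ≥0)) {y : ℝ | ε ≤ |y - m|}).toReal with hqdef
  have hple1 : ∀ σ, p σ ≤ 1 := by
    intro σ
    have h1 : ((gaussianReal m (⟨σ ^ 2, sq_nonneg σ⟩ : ℝ≥0)) S).toReal ≤ (1 : ENNReal).toReal :=
      ENNReal.toReal_mono ENNReal.one_ne_top prob_le_one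
    simpa [ENNReal.toReal_one] using h1
  have hpnonneg : ∀ σ, 0 ≤ p σ := fun σ => ENNReal.toReal_nonneg
  by_cases hpar : k % 2 = 1
  · -- parity 1 : p σ → 1
    have hsub : Sᶜ ⊆ {y : ℝ | ε ≤ |y - m|} := by
      intro y hy
      by_contra h
      simp only [Set.mem_setOf_eq, not_le] at h
      exact hy (by simp only [hS, Set.mem_setOf_eq, hfloor y h, hpar])
    have hbound : ∀ σ : ℝ, 1 - q σ ≤ p σ := by
      intro σ
      set μσ := gaussianReal m (⟨σ ^ 2, sq_nonneg σ⟩ : ℝ≥0)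
      have hf : Measurable fun y : ℝ => ⌊y / d⌋ :=
        Int.measurable_floor.comp (measurable_id.div_const d)
      have hSm : MeasurableSet S :=
        hf (show MeasurableSet {n : ℤ | n % 2 = 1} by trivial)
      have hcompl : μσ Sᶜ ≤ μσ {y : ℝ | ε ≤ |y - m|} := measure_mono hsub
      have h1 : (μσ Sᶜ).toReal ≤ q σ := ENNReal.toReal_mono
        (measure_ne_top _ _) hcompl
      have h2 : (μσ Sᶜ).toReal = 1 - p σ := by
        rw [measure_compl hSm (measure_ne_top _ _)]
        rw [measure_univ]
        rw [ENNReal.toReal_sub_of_le (prob_le_one) (by simp)]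
        simp [hp]
        rfl
      linarith [h1, h2.symm.le]
    have hptend : Tendsto p (nhdsWithin 0 (Set.Ioi 0)) (𝓝 1) := by
      have hlow : Tendsto (fun σ => 1 - q σ) (nhdsWithin 0 (Set.Ioi 0)) (𝓝 1) := by
        have := hq.const_sub 1
        simpa using this
      exact tendsto_of_tendsto_of_tendsto_of_le_of_le hlow tendsto_const_nhds
        (fun σ => hbound σ) (fun σ => hple1 σ)
    have h := (continuous_binEnt.continuousAt (x := 1)).tendsto.comp hptend
    rw [binEnt_one] at h
    simpa [Function.comp_def, hp] using h
  · -- parity 0 : p σ → 0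
    have hpar0 : k % 2 = 0 := by omega
    have hsub : S ⊆ {y : ℝ | ε ≤ |y - m|} := by
      intro y hy
      by_contra h
      simp only [Set.mem_setOf_eq, not_le] at h
      have := hfloor y h
      simp only [hS, Set.mem_setOf_eq, this, hpar0] at hy
      exact absurd hy (by norm_num)
    have hbound : ∀ σ : ℝ, p σ ≤ q σ := by
      intro σ
      exact ENNReal.toReal_mono (measure_ne_top _ _) (measure_mono hsub)
    have hptend : Tendsto p (nhdsWithin 0 (Set.Ioi 0)) (𝓝 0) :=
      tendsto_of_tendsto_of_tendsto_of_le_of_le tendsto_const_nhds hq hpnonneg hbound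
    have h := (continuous_binEnt.continuousAt (x := 0)).tendsto.comp hptend
    rw [binEnt_zero] at h
    simpa [Function.comp_def, hp] using h
end
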